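/- Binary message space case: let the hypotheses be Bernoulli, f₁ = Bernoulli(θ₁), f₀ = Bernoulli(θ₀) with 0 < θ₀ < θ₁ < 1, and let the passive detector's rejection region be M₁ = {1} (reject when the event fails). With λ > 0, the attacker's equilibrium strategy under H₁ is Bernoulli(θ̄₁) where θ̄₁ = θ₁ e^{-1/λ} / (θ₁ e^{-1/λ} + 1 − θ₁). Then 0 < θ̄₁ < θ₁, θ̄₁ is strictly increasing in λ, θ̄₁ → 0 as λ → 0⁺, and θ̄₁ → θ₁ as λ → ∞. -/

import Mathlib

open Real

theorem stmt13 (θ₀ θ₁ : ℝ) (hθ₀ : 0 < θ₀) (hθ₀₁ : θ₀ < θ₁) (hθ₁ : θ₁ < 1)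
    (θbar : ℝ → ℝ)
    (hθbar : ∀ lam : ℝ, θbar lam =
      θ₁ * Real.exp (-1/lam) / (θ₁ * Real.exp (-1/lam) + 1 - θ₁)) :
    (∀ lam : ℝ, 0 < lam → 0 < θbar lam ∧ θbar lam < θ₁) ∧
    StrictMonoOn θbar (Set.Ioi (0:ℝ)) ∧
    Filter.Tendsto θbar (nhdsWithin 0 (Set.Ioi (0:ℝ))) (nhds 0) ∧
    Filter.Tendsto θbar Filter.atTop (nhds θ₁) := by
  have hθ₁pos : 0 < θ₁ := lt_trans hθ₀ hθ₀₁
  have hc : 0 < 1 - θ₁ := by linarith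
  have hden : ∀ x : ℝ, 0 < x → 0 < θ₁ * x + 1 - θ₁ := by
    intro x hx; nlinarith
  refine ⟨?_, ?_, ?_, ?_⟩
  · intro lam hlam
    rw [hθbar]
    have hE : 0 < Real.exp (-1/lam) := Real.exp_pos _
    have hE1 : Real.exp (-1/lam) < 1 := by
      rw [Real.exp_lt_one_iff]
      exact div_neg_of_neg_of_pos (by norm_num) hlam
    refine ⟨div_pos (by positivity) (hden _ hE), ?_⟩
    rw [div_lt_iff₀ (hden _ hE)]
    nlinarith [mul_lt_mul_of_pos_left hE1 (mul_pos hθ₁pos hc)]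
  · intro a ha b hb hab
    simp only [Set.mem_Ioi] at ha hb
    rw [hθbar, hθbar]
    have hEa : 0 < Real.exp (-1/a) := Real.exp_pos _
    have hEb : 0 < Real.exp (-1/b) := Real.exp_pos _
    have hE : Real.exp (-1/a) < Real.exp (-1/b) := by
      apply Real.exp_lt_exp.mpr
      have h1 : 1/b < 1/a := one_div_lt_one_div_of_lt ha hab
      rw [neg_div, neg_div]
      linarith
    rw [div_lt_div_iff₀ (hden _ hEa) (hden _ hEb)]
    nlinarith [mul_lt_mul_of_pos_left hE (mul_pos hθ₁pos hc)]
  · have h1 : Filter.Tendsto (fun lam : ℝ => -1/lam) (nhdsWithin 0 (Set.Ioi (0:ℝ)))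
        Filter.atBot := by
      have h := tendsto_inv_nhdsGT_zero (𝕜 := ℝ)
      have h2 : Filter.Tendsto (fun x : ℝ => -(x⁻¹)) (nhdsWithin 0 (Set.Ioi (0:ℝ)))
          Filter.atBot := Filter.tendsto_neg_atBot_iff.mpr h
      simpa [neg_div, one_div] using h2
    have hE0 : Filter.Tendsto (fun lam : ℝ => Real.exp (-1/lam))
        (nhdsWithin 0 (Set.Ioi (0:ℝ))) (nhds 0) := Real.tendsto_exp_atBot.comp h1
    have hfun : θbar = fun lam => θ₁ * Real.exp (-1/lam) / (θ₁ * Real.exp (-1/lam) + 1 - θ₁) :=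
      funext hθbar
    rw [hfun]
    have hnum : Filter.Tendsto (fun lam : ℝ => θ₁ * Real.exp (-1/lam))
        (nhdsWithin 0 (Set.Ioi (0:ℝ))) (nhds 0) := by
      simpa using hE0.const_mul θ₁
    have hd : Filter.Tendsto (fun lam : ℝ => θ₁ * Real.exp (-1/lam) + 1 - θ₁)
        (nhdsWithin 0 (Set.Ioi (0:ℝ))) (nhds (1 - θ₁)) := by
      have := (hnum.add_const 1).sub_const θ₁
      simpa using this
    have := hnum.div hd (ne_of_gt hc)
    rw [zero_div] at this; exact this
  · have h1 : Filter.Tendsto (fun lam : ℝ => -1/lam) Filter.atTop (nhds 0) := by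
      have := tendsto_inv_atTop_zero (𝕜 := ℝ)
      have := this.neg
      simpa [neg_div, one_div] using this
    have hE1 : Filter.Tendsto (fun lam : ℝ => Real.exp (-1/lam)) Filter.atTop (nhds 1) := by
      have := (Real.continuous_exp.tendsto 0).comp h1
      rw [Real.exp_zero] at this; exact this
    have hfun : θbar = fun lam => θ₁ * Real.exp (-1/lam) / (θ₁ * Real.exp (-1/lam) + 1 - θ₁) :=
      funext hθbar
    rw [hfun]
    have hnum : Filter.Tendsto (fun lam : ℝ => θ₁ * Real.exp (-1/lam))
        Filter.atTop (nhds θ₁) := by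
      simpa using hE1.const_mul θ₁
    have hd : Filter.Tendsto (fun lam : ℝ => θ₁ * Real.exp (-1/lam) + 1 - θ₁)
        Filter.atTop (nhds 1) := by
      have := (hnum.add_const 1).sub_const θ₁
      simpa using this
    have := hnum.div hd one_ne_zero
    rw [div_one] at this; exact this
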